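/- arXiv:1101.0382 — 3 statements merged into one kernel-verified Lean document; each statement's English description precedes it below -/
import Mathlib

section
/- Let d_k, d_{k+1} > 0 and l ∈ ℝ. Define d̄_{k+1} = d_k + l² d_{k+1}, d̄_k = (d_k/d̄_{k+1}) d_{k+1}, and l̄ = d_{k+1} l / d̄_{k+1}. Let P = [[0,1],[1,0]] be the 2×2 swap, L = [[1,0],[l,1]], L̄ = [[1,0],[l̄,1]], D = diag(d_k, d_{k+1}), and D̄ = diag(d̄_k, d̄_{k+1}). Then P^T (L^T D L) P = L̄^T D̄ L̄, and d̄_k d̄_{k+1} = d_k d_{k+1}. -/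
open Matrix

/-- Symmetric permutation update of the `2×2` block of an `LᵀDL` factorization:
with `d̄_{k+1} = d_k + l² d_{k+1}`, `d̄_k = (d_k/d̄_{k+1}) d_{k+1}`,
`l̄ = d_{k+1} l / d̄_{k+1}`, we have `Pᵀ(LᵀDL)P = L̄ᵀD̄L̄` and `d̄_k d̄_{k+1} = d_k d_{k+1}`. -/
theorem stmt_10 (dk dk1 l : ℝ) (hdk : 0 < dk) (hdk1 : 0 < dk1)
    (dbark1 dbark lbar : ℝ)
    (h1 : dbark1 = dk + l ^ 2 * dk1)
    (h2 : dbark = (dk / dbark1) * dk1)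
    (h3 : lbar = dk1 * l / dbark1)
    (P L Lbar D Dbar : Matrix (Fin 2) (Fin 2) ℝ)
    (hP : P = !![0, 1; 1, 0]) (hL : L = !![1, 0; l, 1]) (hLbar : Lbar = !![1, 0; lbar, 1])
    (hD : D = !![dk, 0; 0, dk1]) (hDbar : Dbar = !![dbark, 0; 0, dbark1]) :
    Pᵀ * (Lᵀ * D * L) * P = Lbarᵀ * Dbar * Lbar ∧ dbark * dbark1 = dk * dk1 := by
  subst h1
  have hpos : 0 < dk + l ^ 2 * dk1 := by positivity
  have hne : dk + l ^ 2 * dk1 ≠ 0 := ne_of_gt hpos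
  subst hP hL hLbar hD hDbar h2 h3
  constructor
  · ext i j
    fin_cases i <;> fin_cases j <;>
      · simp [Matrix.mul_apply, Fin.sum_univ_succ]
        field_simp
        try ring
  · field_simp
end

section
/- Let L ∈ ℝ^{n×n} be unit lower triangular, let 1 ≤ j < k ≤ n, let μ ∈ ℤ, and set L̄ = L(I − μ e_k e_j^T), which is again unit lower triangular. Let x̂ ∈ ℝ^n and define ẑ ∈ ℝ^n by ẑ_i = x̂_i for i ≠ j and ẑ_j = x̂_j − μ x̂_k. Let x, z ∈ ℝ^n satisfy z_i = x_i for all i > j. Define the conditional estimates x̄ by the downward recursion x̄_i = x̂_i + Σ_{t=i+1}^n l_{ti}(x_t − x̄_t) for i = n, n−1, …, 1, and define z̄ by the same recursion with L̄, ẑ, z in place of L, x̂, x. Then z̄_i = x̄_i for all i > j, and x̄_j − z̄_j = μ x_k. -/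
open Matrix

/-- Effect of a lower triangular IGT on the conditional estimates: with
`L̄ = L(I - μ e_k e_jᵀ)` (`j < k`), `ẑ` agreeing with `x̂` except `ẑ_j = x̂_j - μ x̂_k`,
and `z_i = x_i` for `i > j`, the conditional estimates satisfy `z̄_i = x̄_i` for all
`i > j` and `x̄_j - z̄_j = μ x_k`. -/
theorem stmt_12 (n : ℕ) (L : Matrix (Fin n) (Fin n) ℝ)
    (hLlow : ∀ i j : Fin n, i < j → L i j = 0) (hLdiag : ∀ i, L i i = 1)
    (j k : Fin n) (hjk : j < k) (μ : ℤ)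
    (Lbar : Matrix (Fin n) (Fin n) ℝ)
    (hLbar : Lbar = L * (1 - (μ : ℝ) • Matrix.single k j 1))
    (xhat zhat : Fin n → ℝ)
    (hzhat : ∀ i, zhat i = if i = j then xhat j - (μ : ℝ) * xhat k else xhat i)
    (x z : Fin n → ℝ) (hxz : ∀ i, j < i → z i = x i)
    (xbar zbar : Fin n → ℝ)
    (hxbar : ∀ i, xbar i = xhat i + ∑ t ∈ Finset.Ioi i, L t i * (x t - xbar t))
    (hzbar : ∀ i, zbar i = zhat i + ∑ t ∈ Finset.Ioi i, Lbar t i * (z t - zbar t)) :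
    (∀ i, j < i → zbar i = xbar i) ∧ xbar j - zbar j = (μ : ℝ) * x k := by
  have hLbar' : ∀ t i : Fin n, Lbar t i = L t i - (if i = j then (μ : ℝ) * L t k else 0) := by
    intro t i
    rw [hLbar]
    simp only [Matrix.mul_apply, Matrix.sub_apply, Matrix.smul_apply, Matrix.one_apply,
      Matrix.single, Matrix.of_apply, smul_eq_mul, mul_sub, mul_ite, mul_one, mul_zero,
      Finset.sum_sub_distrib, Finset.sum_ite_eq', Finset.mem_univ, if_true]
    by_cases h : i = j <;> by_cases h2 : k = t <;> simp_all [eq_comm, Finset.sum_ite_eq, mul_comm]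
  -- part 1: downward strong induction on n - i
  have key : ∀ m : ℕ, ∀ i : Fin n, n - (i : ℕ) = m → j < i → zbar i = xbar i := by
    intro m
    induction m using Nat.strong_induction_on with
    | _ m ih =>
      intro i hm hji
      have hij : i ≠ j := hji.ne'
      rw [hzbar, hxbar, hzhat, if_neg hij]
      congr 1
      apply Finset.sum_congr rfl
      intro t ht
      have hti : i < t := Finset.mem_Ioi.mp ht
      have htj : j < t := hji.trans hti
      have htne : t ≠ j := htj.ne'
      have hrec : zbar t = xbar t := by
        refine ih (n - (t : ℕ)) ?_ t rfl htj
        omega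
      rw [hLbar' t i, if_neg hij, sub_zero, hxz t htj, hrec]
  refine ⟨fun i hi => key (n - (i : ℕ)) i rfl hi, ?_⟩
  -- part 2
  have hsum : ∀ t ∈ Finset.Ioi j, L t j * (x t - xbar t) - Lbar t j * (z t - zbar t)
      = (μ : ℝ) * L t k * (x t - xbar t) := by
    intro t ht
    have htj : j < t := Finset.mem_Ioi.mp ht
    rw [hLbar', if_pos rfl, hxz t htj, key (n - (t : ℕ)) t rfl htj]
    ring
  have hIci : ∑ t ∈ Finset.Ioi j, L t k * (x t - xbar t)
      = ∑ t ∈ Finset.Ici k, L t k * (x t - xbar t) := by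
    refine (Finset.sum_subset ?_ ?_).symm
    · intro t ht
      exact Finset.mem_Ioi.mpr (hjk.trans_le (Finset.mem_Ici.mp ht))
    · intro t ht hnt
      have : t < k := lt_of_not_ge (fun h => hnt (Finset.mem_Ici.mpr h))
      rw [hLlow t k this, zero_mul]
  have hsplit : ∑ t ∈ Finset.Ici k, L t k * (x t - xbar t)
      = L k k * (x k - xbar k) + ∑ t ∈ Finset.Ioi k, L t k * (x t - xbar t) := by
    rw [← Finset.Ioi_insert, Finset.sum_insert (by simp)]
  have hxk : xbar k = xhat k + ∑ t ∈ Finset.Ioi k, L t k * (x t - xbar t) := hxbar k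
  have : xbar j - zbar j = (μ : ℝ) * (xhat k + ∑ t ∈ Finset.Ioi j, L t k * (x t - xbar t)) := by
    rw [hxbar j, hzbar j, hzhat j, if_pos rfl]
    have := Finset.sum_congr rfl hsum
    rw [show ∀ a b c d : ℝ, a + b - ((a - c) + d) = c + (b - d) by intros; ring]
    rw [← Finset.sum_sub_distrib, this, mul_add, Finset.mul_sum]
    simp [mul_assoc]
  rw [this, hIci, hsplit, hLdiag k, one_mul]
  rw [show xhat k + (x k - xbar k + ∑ t ∈ Finset.Ioi k, L t k * (x t - xbar t))
      = x k + ((xhat k + ∑ t ∈ Finset.Ioi k, L t k * (x t - xbar t)) - xbar k) by ring,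
    ← hxk]
  ring
end

section
/- Let L ∈ ℝ^{n×n} be unit lower triangular, let 1 ≤ j < k ≤ n, let μ ∈ ℤ, and set L̄ = L(I − μ e_k e_j^T). Let x̂ ∈ ℝ^n and define ẑ ∈ ℝ^n by ẑ_i = x̂_i for i ≠ j and ẑ_j = x̂_j − μ x̂_k. Let x, z ∈ ℝ^n satisfy z_i = x_i for all i ≠ j and z_j = x_j − μ x_k. Define the conditional estimates x̄ from (L, x̂, x) and z̄ from (L̄, ẑ, z) by the downward recursion. Then z_j − z̄_j = x_j − x̄_j, z̄_i = x̄_i for all i < j, and z_i − z̄_i = x_i − x̄_i for every i = 1, …, n. Consequently, each term (z_i − z̄_i)²/d_i of the transformed sum-of-squares objective equals the corresponding term (x_i − x̄_i)²/d_i of the original objective. -/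
open Matrix

/-- Effect of a lower triangular IGT on the whole search objective: with
`L̄ = L(I - μ e_k e_jᵀ)` (`j < k`), `ẑ_j = x̂_j - μ x̂_k` (other entries unchanged),
`z_j = x_j - μ x_k` and `z_i = x_i` for `i ≠ j`, the conditional estimates satisfy
`z_j - z̄_j = x_j - x̄_j`, `z̄_i = x̄_i` for `i < j`, `z_i - z̄_i = x_i - x̄_i` for all `i`,
and hence each term `(z_i - z̄_i)²/d_i` of the objective is unchanged. -/
theorem stmt_13 (n : ℕ) (L : Matrix (Fin n) (Fin n) ℝ)
    (hLlow : ∀ i j : Fin n, i < j → L i j = 0) (hLdiag : ∀ i, L i i = 1)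
    (j k : Fin n) (hjk : j < k) (μ : ℤ)
    (Lbar : Matrix (Fin n) (Fin n) ℝ)
    (hLbar : Lbar = L * (1 - (μ : ℝ) • Matrix.single k j 1))
    (xhat zhat : Fin n → ℝ)
    (hzhat : ∀ i, zhat i = if i = j then xhat j - (μ : ℝ) * xhat k else xhat i)
    (x z : Fin n → ℝ)
    (hxz : ∀ i, i ≠ j → z i = x i) (hzj : z j = x j - (μ : ℝ) * x k)
    (xbar zbar : Fin n → ℝ)
    (hxbar : ∀ i, xbar i = xhat i + ∑ t ∈ Finset.Ioi i, L t i * (x t - xbar t))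
    (hzbar : ∀ i, zbar i = zhat i + ∑ t ∈ Finset.Ioi i, Lbar t i * (z t - zbar t))
    (d : Fin n → ℝ) (hd : ∀ i, 0 < d i) :
    z j - zbar j = x j - xbar j ∧
    (∀ i, i < j → zbar i = xbar i) ∧
    (∀ i, z i - zbar i = x i - xbar i) ∧
    (∀ i, (z i - zbar i) ^ 2 / d i = (x i - xbar i) ^ 2 / d i) := by
  have hLbarE : ∀ t i : Fin n, Lbar t i = L t i - (if i = j then (μ : ℝ) * L t k else 0) := by
    intro t i
    subst hLbar
    rw [Matrix.mul_sub, Matrix.mul_one, Matrix.sub_apply, Matrix.mul_smul,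
      Matrix.smul_apply, smul_eq_mul]
    congr 1
    by_cases h : i = j
    · subst h
      rw [if_pos rfl, Matrix.mul_single_apply_same, mul_one]
    · rw [if_neg h, Matrix.mul_single_apply_of_ne 1 k j t i h, mul_zero]
  have hsum : ∑ t ∈ Finset.Ioi j, L t k * (x t - xbar t)
      = (x k - xbar k) + ∑ t ∈ Finset.Ioi k, L t k * (x t - xbar t) := by
    have hsub : Finset.Ici k ⊆ Finset.Ioi j := by
      intro t ht
      simp only [Finset.mem_Ici] at ht
      exact Finset.mem_Ioi.mpr (lt_of_lt_of_le hjk ht)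
    rw [← Finset.sum_subset hsub (by
      intro t _ ht2
      have : t < k := by simpa using ht2
      rw [hLlow t k this, zero_mul])]
    rw [show Finset.Ici k = insert k (Finset.Ioi k) by
      ext t
      simp only [Finset.mem_Ici, Finset.mem_insert, Finset.mem_Ioi, Fin.le_def,
        Fin.lt_def, Fin.ext_iff]
      omega]
    rw [Finset.sum_insert (by simp), hLdiag k, one_mul]
  have key : ∀ m : ℕ, ∀ i : Fin n, n - i.val ≤ m →
      ((i ≠ j → zbar i = xbar i) ∧ (z i - zbar i = x i - xbar i)) := by
    intro m
    induction m with
    | zero =>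
      intro i hi
      exact absurd hi (by have := i.isLt; omega)
    | succ m ih =>
      intro i hi
      have IH : ∀ t : Fin n, i < t →
          ((t ≠ j → zbar t = xbar t) ∧ (z t - zbar t = x t - xbar t)) := by
        intro t ht
        exact ih t (by have := t.isLt; have h2 : i.val < t.val := ht; omega)
      by_cases hij : i = j
      · subst hij
        have hzbarj : zbar i = xbar i - (μ : ℝ) * x k := by
          rw [hzbar, hzhat, if_pos rfl]
          have hS : ∑ t ∈ Finset.Ioi i, Lbar t i * (z t - zbar t)
              = ∑ t ∈ Finset.Ioi i, (L t i * (x t - xbar t)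
                  - (μ : ℝ) * (L t k * (x t - xbar t))) := by
            refine Finset.sum_congr rfl fun t ht => ?_
            rw [hLbarE, if_pos rfl, (IH t (Finset.mem_Ioi.mp ht)).2]
            ring
          rw [hS, Finset.sum_sub_distrib, ← Finset.mul_sum, hsum, hxbar i]
          have hxk := hxbar k
          linear_combination (μ : ℝ) * hxk
        refine ⟨fun h => absurd rfl h, ?_⟩
        rw [hzbarj, hzj]
        ring
      · have hz : zbar i = xbar i := by
          rw [hzbar, hxbar, hzhat, if_neg hij]
          congr 1
          refine Finset.sum_congr rfl fun t ht => ?_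
          rw [hLbarE, if_neg hij, sub_zero, (IH t (Finset.mem_Ioi.mp ht)).2]
        exact ⟨fun _ => hz, by rw [hz, hxz i hij]⟩
  have main := fun i : Fin n => key (n - i.val) i le_rfl
  refine ⟨(main j).2, fun i hij => (main i).1 (ne_of_lt hij), fun i => (main i).2,
    fun i => by rw [(main i).2]⟩
end
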